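/- arXiv:1710.00889 — 6 statements merged into one kernel-verified Lean document; each statement's English description precedes it below -/
import Mathlib

section
/- Let U be a nonsingular complex matrix and let V = (1/2)(U + η U^{-1}) for a constant η. If v is an eigenvalue of V, then at least one of u⁺ = v + i√(η − v²) or u⁻ = v − i√(η − v²) is an eigenvalue of U. Conversely, every eigenvalue u of U satisfies u = v ± i√(η − v²) for some eigenvalue v of V. -/
open Matrix Complex

lemma spec_iff {n : ℕ} (M : Matrix (Fin n) (Fin n) ℂ) (x : ℂ) :
    x ∈ spectrum ℂ M ↔ (x • (1 : Matrix (Fin n) (Fin n) ℂ) - M).det = 0 := by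
  rw [spectrum.mem_iff, Matrix.isUnit_iff_isUnit_det, isUnit_iff_ne_zero, not_ne_iff,
    Algebra.algebraMap_eq_smul_one]

lemma key {n : ℕ} (U : Matrix (Fin n) (Fin n) ℂ) (hU : IsUnit U.det) (η v a b : ℂ)
    (hab : a + b = 2 * v) (hmul : a * b = η)
    (V : Matrix (Fin n) (Fin n) ℂ) (hV : V = (1/2 : ℂ) • (U + η • U⁻¹)) :
    (v ∈ spectrum ℂ V ↔ (a ∈ spectrum ℂ U ∨ b ∈ spectrum ℂ U)) := by
  have h1 : U * U⁻¹ = 1 := Matrix.mul_nonsing_inv U hU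
  have hid : U * (v • (1 : Matrix (Fin n) (Fin n) ℂ) - V)
      = (-(1/2) : ℂ) • ((a • (1 : Matrix (Fin n) (Fin n) ℂ) - U) * (b • 1 - U)) := by
    subst hV
    simp only [Matrix.mul_sub, Matrix.sub_mul, Matrix.mul_smul, Matrix.smul_mul,
      Matrix.mul_add, h1, Matrix.mul_one, Matrix.one_mul, smul_sub, smul_add, smul_smul]
    match_scalars
    · linear_combination (-(1/2) : ℂ) * hab
    · ring
    · linear_combination (1/2 : ℂ) * hmul
  have hdet := congrArg Matrix.det hid
  rw [Matrix.det_mul, Matrix.det_smul, Matrix.det_mul, Fintype.card_fin] at hdet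
  have hUd : U.det ≠ 0 := hU.ne_zero
  have hc : ((-(1/2) : ℂ)) ^ n ≠ 0 := pow_ne_zero _ (by norm_num)
  rw [spec_iff, spec_iff, spec_iff]
  constructor
  · intro h
    have : ((-(1/2) : ℂ)) ^ n * ((a • (1 : Matrix (Fin n) (Fin n) ℂ) - U).det * (b • 1 - U).det) = 0 := by
      rw [← hdet, h, mul_zero]
    rcases mul_eq_zero.1 this with h' | h'
    · exact absurd h' hc
    · exact mul_eq_zero.1 h'
  · intro h
    have : ((-(1/2) : ℂ)) ^ n * ((a • (1 : Matrix (Fin n) (Fin n) ℂ) - U).det * (b • 1 - U).det) = 0 := by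
      rcases h with h | h <;> rw [h] <;> ring
    rw [← hdet] at this
    rcases mul_eq_zero.1 this with h' | h'
    · exact absurd h' hUd
    · exact h'

/-- Eigenvalues of V = (U + η U⁻¹)/2 versus eigenvalues of U: if v is an eigenvalue of V
then at least one of v ± i·s (with s² = η − v²) is an eigenvalue of U, and conversely every
eigenvalue of U has this form for some eigenvalue v of V. -/
theorem stmt0 {n : ℕ} (U : Matrix (Fin n) (Fin n) ℂ) (η : ℂ)
    (hU : IsUnit U.det)
    (V : Matrix (Fin n) (Fin n) ℂ) (hV : V = (1/2 : ℂ) • (U + η • U⁻¹)) :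
    (∀ v ∈ spectrum ℂ V, ∀ s : ℂ, s ^ 2 = η - v ^ 2 →
      (v + Complex.I * s ∈ spectrum ℂ U ∨ v - Complex.I * s ∈ spectrum ℂ U)) ∧
    (∀ u ∈ spectrum ℂ U, ∃ v ∈ spectrum ℂ V, ∃ s : ℂ, s ^ 2 = η - v ^ 2 ∧
      (u = v + Complex.I * s ∨ u = v - Complex.I * s)) := by
  constructor
  · intro v hv s hs
    have hab : (v + Complex.I * s) + (v - Complex.I * s) = 2 * v := by ring
    have hmul : (v + Complex.I * s) * (v - Complex.I * s) = η := by
      linear_combination hs + (-(s ^ 2)) * Complex.I_sq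
    exact (key U hU η v _ _ hab hmul V hV).1 hv
  · intro u hu
    have hu0 : u ≠ 0 := by
      rintro rfl
      rw [spec_iff] at hu
      simp only [zero_smul, zero_sub, Matrix.det_neg] at hu
      exact hU.ne_zero (by
        rcases mul_eq_zero.1 hu with h | h
        · exact absurd h (pow_ne_zero _ (by norm_num))
        · exact h)
    refine ⟨(u + η / u) / 2, ?_, Complex.I * (u ^ 2 - η) / (2 * u), ?_, Or.inr ?_⟩
    · have hab : u + η / u = 2 * ((u + η / u) / 2) := by ring
      have hmul : u * (η / u) = η := by field_simp
      exact (key U hU η _ u (η / u) hab hmul V hV).2 (Or.inl hu)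
    · rw [div_pow, mul_pow, Complex.I_sq]
      field_simp
      ring
    · have h3 : Complex.I * (Complex.I * (u ^ 2 - η) / (2 * u)) = -((u ^ 2 - η) / (2 * u)) := by
        rw [mul_div_assoc', ← mul_assoc, Complex.I_mul_I]
        ring
      rw [h3]
      field_simp
      ring
end

section
/- Let B̃ and R be real symmetric n×n matrices with B̃² = I and R² = I, let ρ ∈ (−2, 2), and set Ω = B̃R, Ω_S = (Ω + Ωᵀ)/2, and U = Ω + (ρ/2)B̃. If w is an eigenvalue of Ω_S with −1 < w < 1, then both complex numbers w + i√(1 − ρ²/4 − w²) and w − i√(1 − ρ²/4 − w²) are eigenvalues of U (viewed as a complex matrix). -/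
open Matrix

set_option maxHeartbeats 1600000
set_option synthInstance.maxHeartbeats 400000

private lemma mapRC {n : ℕ} (a : ℝ) (M : Matrix (Fin n) (Fin n) ℝ) :
    (a • M).map (algebraMap ℝ ℂ) = (a : ℂ) • M.map (algebraMap ℝ ℂ) := by
  ext i j
  simp [Matrix.map_apply]

/-- If w ∈ (−1,1) is an eigenvalue of Ω_S = (Ω + Ωᵀ)/2, then both w ± i√(1 − ρ²/4 − w²)
are (complex) eigenvalues of U = Ω + (ρ/2)B̃. -/
theorem stmt3 {n : ℕ} (Bt R : Matrix (Fin n) (Fin n) ℝ) (ρ : ℝ)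
    (hρ : ρ ∈ Set.Ioo (-2 : ℝ) 2)
    (hBt : Btᵀ = Bt) (hR : Rᵀ = R) (hB2 : Bt * Bt = 1) (hR2 : R * R = 1)
    (Ω ΩS U : Matrix (Fin n) (Fin n) ℝ)
    (hΩ : Ω = Bt * R) (hΩS : ΩS = (1/2 : ℝ) • (Ω + Ωᵀ)) (hU : U = Ω + (ρ/2) • Bt)
    (w : ℝ) (hw1 : -1 < w) (hw2 : w < 1) (hw : w ∈ spectrum ℝ ΩS)
    (s : ℂ) (hs : s ^ 2 = ((1 - ρ^2/4 - w^2 : ℝ) : ℂ)) :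
    ((w : ℂ) + Complex.I * s ∈ spectrum ℂ (U.map Complex.ofReal)) ∧
    ((w : ℂ) - Complex.I * s ∈ spectrum ℂ (U.map Complex.ofReal)) := by
  classical
  obtain ⟨hρ1, hρ2⟩ := hρ
  -- real-level identities
  have hΩT : Ωᵀ = R * Bt := by rw [hΩ, Matrix.transpose_mul, hBt, hR]
  have hS : ΩS = (1/2 : ℝ) • (Bt * R + R * Bt) := by rw [hΩS, hΩT, hΩ]
  have hUr : U = Bt * R + (ρ/2) • Bt := by rw [hU, hΩ]
  -- complexify
  set f := algebraMap ℝ ℂ with hfdef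
  set Bc := Bt.map f with hBcdef
  set Rc := R.map f with hRcdef
  set Uc := U.map f with hUcdef
  set Sc := ΩS.map f with hScdef
  have hBc2 : Bc * Bc = 1 := by
    rw [hBcdef, ← Matrix.map_mul, hB2, Matrix.map_one _ (map_zero f) (map_one f)]
  have hRc2 : Rc * Rc = 1 := by
    rw [hRcdef, ← Matrix.map_mul, hR2, Matrix.map_one _ (map_zero f) (map_one f)]
  have hScId : Sc = ((1:ℂ)/2) • (Bc * Rc + Rc * Bc) := by
    rw [hScdef, hS, mapRC, Matrix.map_add f (map_add f), Matrix.map_mul, Matrix.map_mul]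
    norm_num
    rfl
  have hSc2 : Bc * Rc + Rc * Bc = (2:ℂ) • Sc := by
    rw [hScId, smul_smul]
    norm_num
  have hUcId : Uc = Bc * Rc + ((ρ:ℂ)/2) • Bc := by
    rw [hUcdef, hUr, Matrix.map_add f (map_add f), Matrix.map_mul, mapRC]
    push_cast
    ring_nf
    rfl
  -- Sc commutes with Bc, Rc, Uc
  have hXB : (Bc * Rc + Rc * Bc) * Bc = Bc * (Bc * Rc + Rc * Bc) := by
    rw [add_mul, mul_add, mul_assoc Rc Bc Bc, hBc2, mul_one, ← mul_assoc Bc Bc Rc, hBc2,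
      one_mul, mul_assoc, add_comm]
  have hXR : (Bc * Rc + Rc * Bc) * Rc = Rc * (Bc * Rc + Rc * Bc) := by
    rw [add_mul, mul_add, mul_assoc Bc Rc Rc, hRc2, mul_one, ← mul_assoc Rc Rc Bc, hRc2,
      one_mul, ← mul_assoc, add_comm]
  have hSB : Sc * Bc = Bc * Sc := by
    rw [hScId, smul_mul_assoc, hXB, mul_smul_comm]
  have hSR : Sc * Rc = Rc * Sc := by
    rw [hScId, smul_mul_assoc, hXR, mul_smul_comm]
  have hSU : Sc * Uc = Uc * Sc := by
    rw [hUcId, mul_add, add_mul, mul_smul_comm, smul_mul_assoc, hSB]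
    congr 1
    rw [← mul_assoc, hSB, mul_assoc, hSR, ← mul_assoc]
  -- endomorphisms
  set φ := (Matrix.toLinAlgEquiv' : Matrix (Fin n) (Fin n) ℂ ≃ₐ[ℂ] _) with hφdef
  set B' := φ Bc with hB'def
  set R' := φ Rc with hR'def
  set U' := φ Uc with hU'def
  set S' := φ Sc with hS'def
  set W := (w : ℂ) with hWdef
  set E := LinearMap.ker (S' - W • (1 : Module.End ℂ (Fin n → ℂ))) with hEdef
  have hmemE : ∀ x, x ∈ E ↔ S' x = W • x := by
    intro x
    rw [hEdef, LinearMap.mem_ker, LinearMap.sub_apply, LinearMap.smul_apply,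
      Module.End.one_apply, sub_eq_zero]
  -- E is nontrivial
  have hdet : ((w • 1 - ΩS : Matrix (Fin n) (Fin n) ℝ)).det = 0 := by
    have h1 := spectrum.mem_iff.mp hw
    by_contra hne
    exact h1 (by
      rw [Algebra.algebraMap_eq_smul_one]
      exact (Matrix.isUnit_iff_isUnit_det _).mpr (isUnit_iff_ne_zero.mpr hne))
  have hdetC : (W • 1 - Sc).det = 0 := by
    have hmap : ((w • 1 - ΩS : Matrix (Fin n) (Fin n) ℝ)).map f = W • 1 - Sc := by
      rw [Matrix.map_sub f (map_sub f), mapRC, Matrix.map_one _ (map_zero f) (map_one f),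
        hScdef]
    rw [← hmap]
    have := (RingHom.map_det f (w • 1 - ΩS)).symm
    rw [show (RingHom.mapMatrix f) (w • 1 - ΩS) = (w • 1 - ΩS).map f from rfl] at this
    rw [this, hdet, map_zero]
  obtain ⟨v, hv0, hv⟩ := Matrix.exists_mulVec_eq_zero_iff.mpr hdetC
  have hvE : v ∈ E := by
    rw [hmemE, hS'def, Matrix.toLinAlgEquiv'_apply]
    rw [Matrix.sub_mulVec, Matrix.smul_mulVec, Matrix.one_mulVec] at hv
    exact (sub_eq_zero.mp hv).symm
  -- invariance of E
  have hinv : ∀ (Mc : Matrix (Fin n) (Fin n) ℂ), Sc * Mc = Mc * Sc →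
      ∀ x ∈ E, (φ Mc) x ∈ E := by
    intro Mc hcomm x hx
    rw [hmemE] at hx ⊢
    have : S' ((φ Mc) x) = (φ Mc) (S' x) := by
      rw [← Module.End.mul_apply, ← Module.End.mul_apply, hS'def, ← _root_.map_mul,
        ← _root_.map_mul, hcomm]
    rw [this, hx, _root_.map_smul]
  have hBE : ∀ x ∈ E, B' x ∈ E := hinv Bc hSB
  have hRE : ∀ x ∈ E, R' x ∈ E := hinv Rc hSR
  have hUE : ∀ x ∈ E, U' x ∈ E := hinv Uc hSU
  set b := B'.restrict hBE with hbdef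
  set r := R'.restrict hRE with hrdef
  set u := U'.restrict hUE with hudef
  -- algebraic relations in End ℂ E
  have hbb : b * b = 1 := by
    apply LinearMap.ext
    intro x
    apply Subtype.ext
    simp only [Module.End.mul_apply, hbdef, LinearMap.restrict_coe_apply, Module.End.one_apply]
    rw [← Module.End.mul_apply, hB'def, ← _root_.map_mul, hBc2, _root_.map_one,
      Module.End.one_apply]
  have hrr : r * r = 1 := by
    apply LinearMap.ext
    intro x
    apply Subtype.ext
    simp only [Module.End.mul_apply, hrdef, LinearMap.restrict_coe_apply, Module.End.one_apply]
    rw [← Module.End.mul_apply, hR'def, ← _root_.map_mul, hRc2, _root_.map_one,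
      Module.End.one_apply]
  have hbr : b * r + r * b = (2 * W) • 1 := by
    apply LinearMap.ext
    intro x
    apply Subtype.ext
    simp only [LinearMap.add_apply, Module.End.mul_apply, LinearMap.smul_apply,
      hbdef, hrdef, LinearMap.restrict_coe_apply, Module.End.one_apply,
      Submodule.coe_add, SetLike.val_smul]
    have h1 : B' (R' x) + R' (B' x) = (φ (Bc * Rc + Rc * Bc)) x := by
      rw [_root_.map_add, _root_.map_mul, _root_.map_mul, LinearMap.add_apply,
        Module.End.mul_apply, Module.End.mul_apply, hB'def, hR'def]
    rw [h1, hSc2, _root_.map_smul, LinearMap.smul_apply, ← hS'def, (hmemE _).mp x.2,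
      smul_smul]
  have hud : u = b * r + ((ρ:ℂ)/2) • b := by
    apply LinearMap.ext
    intro x
    apply Subtype.ext
    simp only [LinearMap.add_apply, Module.End.mul_apply, LinearMap.smul_apply,
      hbdef, hrdef, hudef, LinearMap.restrict_coe_apply, Submodule.coe_add, SetLike.val_smul]
    rw [hU'def, hUcId, _root_.map_add, _root_.map_smul, _root_.map_mul, LinearMap.add_apply,
      LinearMap.smul_apply, Module.End.mul_apply, ← hB'def, ← hR'def]
  -- consequences, in additive form
  have e3 : b * (b * r) = r := by rw [← mul_assoc, hbb, one_mul]
  have h1 : b * (b * r) + b * (r * b) = (2 * W) • b := by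
    rw [← mul_add, hbr, mul_smul_comm, mul_one]
  have e2a : r + b * (r * b) = (2 * W) • b := by have h1' := h1; rwa [e3] at h1'
  have h2 : (b * r) * r + (r * b) * r = (2 * W) • r := by
    rw [← add_mul, hbr, smul_mul_assoc, one_mul]
  have h3 : b + r * (b * r) = (2 * W) • r := by
    rw [← mul_assoc r b r]
    rw [mul_assoc b r r, hrr, mul_one] at h2
    exact h2
  have h4 : (1 : Module.End ℂ E) + b * (r * (b * r)) = (2 * W) • (b * r) := by
    have h5 := congrArg (fun x => b * x) h3
    rw [mul_add, ← mul_assoc b r (b * r), mul_assoc b r (b * r), hbb, mul_smul_comm] at h5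
    exact h5
  have hl12gen : ∀ t : ℂ, t ^ 2 = ((1 - ρ^2/4 - w^2 : ℝ) : ℂ) →
      (W + Complex.I * t) * (W - Complex.I * t) = (1:ℂ) - ((ρ:ℂ)/2)^2 := by
    intro t ht
    have h1' : (W + Complex.I * t) * (W - Complex.I * t) = W^2 - Complex.I^2 * t^2 := by ring
    rw [h1', Complex.I_sq, ht, hWdef]
    push_cast
    ring
  have huu : u * u = (2 * W) • u - ((1:ℂ) - ((ρ:ℂ)/2)^2) • 1 := by
    have e1 : b * (r * (b * r)) = (2 * W) • (b * r) - 1 :=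
      by rw [← h4]; abel
    have e2 : b * (r * b) = (2 * W) • b - r :=
      by rw [← e2a]; abel
    rw [hud, add_mul, mul_add, mul_add, smul_mul_assoc, smul_mul_assoc,
      mul_smul_comm, mul_smul_comm, smul_smul, mul_assoc b r (b * r), e1,
      mul_assoc b r b, e2, e3, hbb]
    match_scalars <;> ring
  have huupt : ∀ y : E, u (u y) = (2 * W) • (u y) - ((1:ℂ) - ((ρ:ℂ)/2)^2) • y := by
    intro y
    have h := LinearMap.ext_iff.mp huu y
    simpa only [Module.End.mul_apply, LinearMap.sub_apply, LinearMap.smul_apply,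
      Module.End.one_apply] using h
  -- finiteness and traces
  haveI : Nontrivial E := ⟨⟨⟨v, hvE⟩, 0, by simp [hv0]⟩⟩
  have hm0 : ((Module.finrank ℂ E : ℂ)) ≠ 0 := Nat.cast_ne_zero.mpr Module.finrank_pos.ne'
  set τ := LinearMap.trace ℂ E with hτdef
  set m := ((Module.finrank ℂ E : ℂ)) with hmdef
  have ht1 : τ 1 = m := LinearMap.trace_one ℂ E
  have tbr : τ (b * r) = W * m := by
    have h := congrArg τ hbr
    rw [_root_.map_add, LinearMap.trace_mul_comm ℂ r b, _root_.map_smul, ht1, smul_eq_mul] at h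
    linear_combination h / 2
  have tA : (2:ℂ) * τ r = 2 * W * τ b := by
    have h := congrArg τ h1
    rw [_root_.map_add, _root_.map_smul, smul_eq_mul, e3,
      LinearMap.trace_mul_comm ℂ b (r * b), mul_assoc r b b, hbb, mul_one] at h
    linear_combination h
  have tB : (2:ℂ) * τ b = 2 * W * τ r := by
    have h := congrArg τ h3
    rw [_root_.map_add, _root_.map_smul, smul_eq_mul,
      LinearMap.trace_mul_comm ℂ r (b * r), mul_assoc b r r, hrr, mul_one] at h
    linear_combination h
  have hW2 : (1:ℂ) - W^2 ≠ 0 := by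
    rw [hWdef]
    intro h
    have h3' : (1 - w^2 : ℝ) = 0 := by
      have h2' : ((1 - w^2 : ℝ) : ℂ) = 0 := by push_cast; linear_combination h
      exact_mod_cast h2'
    nlinarith
  have tb0 : τ b = 0 := by
    have hcomb : ((1:ℂ) - W^2) * (2 * τ b) = 0 := by linear_combination tB + W * tA
    have h := (mul_eq_zero.mp hcomb).resolve_left hW2
    linear_combination h / 2
  have tu : τ u = W * m := by
    have h := congrArg τ hud
    rw [_root_.map_add, _root_.map_smul, smul_eq_mul, tbr, tb0, mul_zero, add_zero] at h
    exact h
  -- the key claim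
  have key : ∀ t : ℂ, t ^ 2 = ((1 - ρ^2/4 - w^2 : ℝ) : ℂ) →
      (W + Complex.I * t) ∈ spectrum ℂ (U.map Complex.ofReal) := by
    intro t ht
    by_contra hnot
    have hcoe : U.map Complex.ofReal = Uc := by rw [hUcdef, hfdef, Complex.coe_algebraMap]
    rw [hcoe, ← AlgEquiv.spectrum_eq φ Uc, ← hU'def] at hnot
    have hunit : IsUnit ((W + Complex.I * t) • (1 : Module.End ℂ (Fin n → ℂ)) - U') := by
      have h := spectrum.notMem_iff.mp hnot
      rwa [Module.algebraMap_end_eq_smul_id, ← Module.End.one_eq_id] at h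
    have hinj : Function.Injective
        ((W + Complex.I * t) • (1 : Module.End ℂ (Fin n → ℂ)) - U') :=
      ((Module.End.isUnit_iff _).mp hunit).injective
    have hinjE : ∀ z : E, u z - (W + Complex.I * t) • z = 0 → z = 0 := by
      intro z hz
      have hz1 : U' z.1 - (W + Complex.I * t) • z.1 = 0 := by
        have h := congrArg Subtype.val hz
        simpa only [hudef, LinearMap.restrict_coe_apply, AddSubgroupClass.coe_sub,
          SetLike.val_smul, ZeroMemClass.coe_zero] using h
      have hz2 : ((W + Complex.I * t) • (1 : Module.End ℂ (Fin n → ℂ)) - U') z.1 = 0 := by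
        rw [LinearMap.sub_apply, LinearMap.smul_apply, Module.End.one_apply]
        linear_combination (norm := module) - hz1
      have h0 : z.1 = 0 := hinj (a₁ := z.1) (a₂ := 0) (by rw [hz2, _root_.map_zero])
      exact Subtype.ext h0
    have hl12 := hl12gen t ht
    have hupt : ∀ y : E, u y = (W - Complex.I * t) • y := by
      intro y
      have hq : u (u y - (W - Complex.I * t) • y)
          - (W + Complex.I * t) • (u y - (W - Complex.I * t) • y) = 0 := by
        rw [map_sub u, _root_.map_smul u, huupt y]
        match_scalars
        · ring
        · linear_combination hl12
      have hz := hinjE _ hq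
      exact sub_eq_zero.mp hz
    have hueq : u = (W - Complex.I * t) • (1 : Module.End ℂ E) := by
      apply LinearMap.ext
      intro y
      rw [hupt y, LinearMap.smul_apply, Module.End.one_apply]
    have htr : W * m = (W - Complex.I * t) * m := by
      have h := congrArg τ hueq
      rw [tu, _root_.map_smul, ht1, smul_eq_mul] at h
      exact h
    have hIt : Complex.I * t = 0 := by
      have h := mul_right_cancel₀ hm0 htr
      linear_combination h
    have ht0 : t = 0 := by
      rcases mul_eq_zero.mp hIt with h | h
      · exact absurd h Complex.I_ne_zero
      · exact h
    have hy0 : (⟨v, hvE⟩ : E) ≠ 0 := by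
      intro h
      rw [Submodule.mk_eq_zero] at h
      exact hv0 h
    apply hy0
    apply hinjE
    rw [hupt ⟨v, hvE⟩, ht0]
    module
  refine ⟨key s hs, ?_⟩
  have h2 := key (-s) (by rw [neg_sq]; exact hs)
  have e : W - Complex.I * s = W + Complex.I * (-s) := by ring
  rw [e]
  exact h2
end

section
/- Let B be a real symmetric projection (B² = B = Bᵀ) and R a real symmetric matrix with R² = I. A complex number ω ∉ {−1, 0, 1} is an eigenvalue of BR if and only if ω is an eigenvalue of Ω_S := BRB − B^⊥RB^⊥, where B^⊥ = I − B. -/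
open Matrix

lemma mem_spectrum_iff_vec {n : ℕ} (M : Matrix (Fin n) (Fin n) ℂ) (ω : ℂ) :
    ω ∈ spectrum ℂ M ↔ ∃ v : Fin n → ℂ, v ≠ 0 ∧ M *ᵥ v = ω • v := by
  rw [spectrum.mem_iff, Matrix.isUnit_iff_isUnit_det, isUnit_iff_ne_zero, not_ne_iff,
    ← Matrix.exists_mulVec_eq_zero_iff]
  have halg : (algebraMap ℂ (Matrix (Fin n) (Fin n) ℂ)) ω = ω • 1 :=
    Algebra.algebraMap_eq_smul_one ω
  constructor
  · rintro ⟨v, hv0, hv⟩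
    refine ⟨v, hv0, ?_⟩
    rw [halg, Matrix.sub_mulVec, Matrix.smul_mulVec, Matrix.one_mulVec] at hv
    linear_combination (norm := module) -hv
  · rintro ⟨v, hv0, hv⟩
    refine ⟨v, hv0, ?_⟩
    rw [halg, Matrix.sub_mulVec, Matrix.smul_mulVec, Matrix.one_mulVec, hv, sub_self]

lemma eig_equiv {n : ℕ} (P S : Matrix (Fin n) (Fin n) ℂ)
    (hP2 : P * P = P) (hS2 : S * S = 1) (ω : ℂ)
    (hωn1 : ω ≠ -1) (hω0 : ω ≠ 0) (hω1 : ω ≠ 1) :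
    (∃ v : Fin n → ℂ, v ≠ 0 ∧ (P * S) *ᵥ v = ω • v) ↔
    (∃ v : Fin n → ℂ, v ≠ 0 ∧ (P * S * P - (1 - P) * S * (1 - P)) *ᵥ v = ω • v) := by
  constructor
  · rintro ⟨v, hv0, hv⟩
    refine ⟨v, hv0, ?_⟩
    have hPv : P *ᵥ v = v := by
      have h1 : P *ᵥ (ω • v) = ω • v := by
        rw [← hv, Matrix.mulVec_mulVec, ← mul_assoc, hP2, hv]
      have h2 : ω • (P *ᵥ v) = ω • v := by
        rw [← Matrix.mulVec_smul, h1]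
      exact smul_right_injective (Fin n → ℂ) hω0 h2
    have hQv : (1 - P) *ᵥ v = 0 := by
      rw [Matrix.sub_mulVec, Matrix.one_mulVec, hPv, sub_self]
    rw [Matrix.sub_mulVec,
      show (P * S * P) *ᵥ v = (P * S) *ᵥ (P *ᵥ v) from (Matrix.mulVec_mulVec v (P * S) P).symm,
      show ((1 - P) * S * (1 - P)) *ᵥ v = ((1 - P) * S) *ᵥ ((1 - P) *ᵥ v) from
        (Matrix.mulVec_mulVec v ((1 - P) * S) (1 - P)).symm,
      hPv, hQv, Matrix.mulVec_zero, hv, sub_zero]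
  · rintro ⟨x, hx0, hx⟩
    obtain ⟨u, hu⟩ : ∃ u, P *ᵥ x = u := ⟨_, rfl⟩
    obtain ⟨v, hvdef⟩ : ∃ v, x - u = v := ⟨_, rfl⟩
    have hPu : P *ᵥ u = u := by rw [← hu, Matrix.mulVec_mulVec, hP2]
    have hPv : P *ᵥ v = 0 := by rw [← hvdef, Matrix.mulVec_sub, hu, hPu, sub_self]
    have hxuv : x = u + v := by rw [← hvdef]; abel
    have hQx : (1 - P) *ᵥ x = v := by
      rw [Matrix.sub_mulVec, Matrix.one_mulVec, hu, hvdef]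
    have hx' : (P * S) *ᵥ u - ((1 - P) * S) *ᵥ v = ω • x := by
      rw [← hu, Matrix.mulVec_mulVec, ← hQx, Matrix.mulVec_mulVec, mul_assoc,
        mul_assoc, ← Matrix.sub_mulVec] at *
      exact hx
    -- apply P
    have hPSu : (P * S) *ᵥ u = ω • u := by
      have h1 : P *ᵥ ((P * S) *ᵥ u - ((1 - P) * S) *ᵥ v) = P *ᵥ (ω • x) := by rw [hx']
      rw [Matrix.mulVec_sub, Matrix.mulVec_mulVec, Matrix.mulVec_mulVec,
        Matrix.mulVec_smul, hu] at h1
      have e1 : P * (P * S) = P * S := by rw [← mul_assoc, hP2]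
      have e2 : P * ((1 - P) * S) = 0 := by
        rw [← mul_assoc, mul_sub, mul_one, hP2, sub_self, zero_mul]
      rw [e1, e2, Matrix.zero_mulVec, sub_zero] at h1
      exact h1
    -- apply 1 - P
    have hQSv : ((1 - P) * S) *ᵥ v = -(ω • v) := by
      have h1 : (1 - P) *ᵥ ((P * S) *ᵥ u - ((1 - P) * S) *ᵥ v) = (1 - P) *ᵥ (ω • x) := by
        rw [hx']
      rw [Matrix.mulVec_sub, Matrix.mulVec_mulVec, Matrix.mulVec_mulVec,
        Matrix.mulVec_smul, hQx] at h1
      have e1 : (1 - P) * (P * S) = 0 := by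
        rw [← mul_assoc, sub_mul, one_mul, hP2, sub_self, zero_mul]
      have eQ : (1 - P) * (1 - P) = 1 - P := by
        rw [mul_sub, mul_one, sub_mul, one_mul, hP2, sub_self, sub_zero]
      have e2 : (1 - P) * ((1 - P) * S) = (1 - P) * S := by
        rw [← mul_assoc, eQ]
      rw [e1, e2, Matrix.zero_mulVec, zero_sub] at h1
      rw [← h1, neg_neg]
    by_cases hu0 : u = 0
    · -- then v = x ≠ 0 and (1-P)S v = -ω v; build eigenvector of PS
      have hvx : v = x := by rw [← hvdef, hu0, sub_zero]
      have hv0 : v ≠ 0 := hvx ▸ hx0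
      obtain ⟨w, hw⟩ : ∃ w, (P * S) *ᵥ v = w := ⟨_, rfl⟩
      have hPw : P *ᵥ w = w := by rw [← hw, Matrix.mulVec_mulVec, ← mul_assoc, hP2]
      have hSv : S *ᵥ v = w + -(ω • v) := by
        have hsplit : S = P * S + (1 - P) * S := by noncomm_ring
        calc S *ᵥ v = (P * S + (1 - P) * S) *ᵥ v := by rw [← hsplit]
          _ = w + -(ω • v) := by rw [Matrix.add_mulVec, hw, hQSv]
      have hω2 : ω * ω - 1 ≠ 0 := by
        intro h
        have h' : (ω - 1) * (ω + 1) = 0 := by linear_combination h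
        rcases mul_eq_zero.mp h' with h'' | h''
        · exact hω1 (by linear_combination h'')
        · exact hωn1 (by linear_combination h'')
      have hSSv : S *ᵥ S *ᵥ v = v := by
        rw [Matrix.mulVec_mulVec, hS2, Matrix.one_mulVec]
      have hw0 : w ≠ 0 := by
        intro h0
        have hSv' : S *ᵥ v = -(ω • v) := by rw [hSv, h0, zero_add]
        have hvv : v = (ω * ω) • v := by
          calc v = S *ᵥ S *ᵥ v := hSSv.symm
            _ = (ω * ω) • v := by
                rw [hSv', Matrix.mulVec_neg, Matrix.mulVec_smul, hSv', smul_neg, neg_neg,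
                  smul_smul]
        have hz : (ω * ω - 1) • v = 0 := by
          rw [sub_smul, one_smul, ← hvv, sub_self]
        exact hv0 (by simpa [hω2] using smul_eq_zero.mp hz)
      refine ⟨w, hw0, ?_⟩
      have hSw : S *ᵥ w = (1 - ω * ω) • v + ω • w := by
        have h1 : S *ᵥ (w + -(ω • v)) = v := by rw [← hSv, hSSv]
        rw [Matrix.mulVec_add, Matrix.mulVec_neg, Matrix.mulVec_smul] at h1
        have h2 : S *ᵥ w - ω • (S *ᵥ v) = v := by rw [sub_eq_add_neg]; exact h1
        have h3 : S *ᵥ w = v + ω • (S *ᵥ v) := sub_eq_iff_eq_add.mp h2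
        rw [h3, hSv]
        module
      calc (P * S) *ᵥ w = P *ᵥ S *ᵥ w := (Matrix.mulVec_mulVec w P S).symm
        _ = (1 - ω * ω) • (P *ᵥ v) + ω • (P *ᵥ w) := by
            rw [hSw, Matrix.mulVec_add, Matrix.mulVec_smul, Matrix.mulVec_smul]
        _ = ω • w := by rw [hPv, hPw, smul_zero, zero_add]
    · -- u is an eigenvector
      refine ⟨u, hu0, hPSu⟩

/-- ω ∉ {−1,0,1} is an eigenvalue of BR iff it is an eigenvalue of
Ω_S = BRB − B^⊥RB^⊥, where B^⊥ = I − B. -/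
theorem stmt6 {n : ℕ} (B R : Matrix (Fin n) (Fin n) ℝ)
    (hBs : Bᵀ = B) (hB2 : B * B = B) (hRs : Rᵀ = R) (hR2 : R * R = 1)
    (ω : ℂ) (hω : ω ∉ ({-1, 0, 1} : Set ℂ)) :
    ω ∈ spectrum ℂ ((B * R).map Complex.ofReal) ↔
    ω ∈ spectrum ℂ ((B * R * B - (1 - B) * R * (1 - B)).map Complex.ofReal) := by
  simp only [Set.mem_insert_iff, Set.mem_singleton_iff, not_or] at hω
  obtain ⟨hωn1, hω0, hω1⟩ := hω
  set g : Matrix (Fin n) (Fin n) ℝ →+* Matrix (Fin n) (Fin n) ℂ :=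
    (Complex.ofRealHom : ℝ →+* ℂ).mapMatrix with hg
  have hmap : ∀ X : Matrix (Fin n) (Fin n) ℝ, X.map Complex.ofReal = g X := fun X => rfl
  have hP2 : g B * g B = g B := by rw [← _root_.map_mul, hB2]
  have hS2 : g R * g R = 1 := by rw [← _root_.map_mul, hR2, _root_.map_one]
  have hEq1 : (B * R).map Complex.ofReal = g B * g R := by rw [hmap, _root_.map_mul]
  have hEq2 : (B * R * B - (1 - B) * R * (1 - B)).map Complex.ofReal
      = g B * g R * g B - (1 - g B) * g R * (1 - g B) := by
    rw [hmap]
    rw [_root_.map_sub, _root_.map_mul, _root_.map_mul, _root_.map_mul, _root_.map_mul, _root_.map_sub, _root_.map_one]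
  rw [hEq1, hEq2, mem_spectrum_iff_vec, mem_spectrum_iff_vec]
  exact eig_equiv (g B) (g R) hP2 hS2 ω hωn1 hω0 hω1
end

section
/- Let S have full column rank, R be symmetric with R² = I, B = S(SᵀS)^{-1}Sᵀ, W = (SᵀS)^{-1}SᵀRS, and Ω_S = BRB − B^⊥RB^⊥ with B^⊥ = I − B. Then W is singular if and only if Ω_S is singular. -/
open Matrix

/-- W = S⁺RS is singular iff Ω_S = BRB − B^⊥RB^⊥ is singular. -/
theorem stmt9 {m n : ℕ} (S : Matrix (Fin m) (Fin n) ℝ) (hS : LinearIndependent ℝ Sᵀ)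
    (R : Matrix (Fin m) (Fin m) ℝ) (hRs : Rᵀ = R) (hR2 : R * R = 1)
    (B : Matrix (Fin m) (Fin m) ℝ) (hB : B = S * (Sᵀ * S)⁻¹ * Sᵀ)
    (W : Matrix (Fin n) (Fin n) ℝ) (hW : W = (Sᵀ * S)⁻¹ * Sᵀ * R * S)
    (ΩS : Matrix (Fin m) (Fin m) ℝ)
    (hΩS : ΩS = B * R * B - (1 - B) * R * (1 - B)) :
    W.det = 0 ↔ ΩS.det = 0 := by
  -- S has injective mulVec
  have hSinj : Function.Injective S.mulVec := Matrix.mulVec_injective_iff.mpr hS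
  have hSker : ∀ v : Fin n → ℝ, S *ᵥ v = 0 → v = 0 := by
    intro v hv
    exact hSinj (by simpa using hv)
  -- Gram matrix is invertible
  set G : Matrix (Fin n) (Fin n) ℝ := Sᵀ * S with hGdef
  have hG : IsUnit G := by
    rw [← Matrix.mulVec_injective_iff_isUnit]
    intro v w hvw
    have key : ∀ u : Fin n → ℝ, G *ᵥ u = 0 → u = 0 := by
      intro u hu
      have h0 : u ⬝ᵥ (G *ᵥ u) = 0 := by rw [hu]; simp
      rw [hGdef, ← Matrix.mulVec_mulVec, Matrix.dotProduct_mulVec,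
        Matrix.vecMul_transpose] at h0
      exact hSker u (dotProduct_self_eq_zero.mp h0)
    have h := key (v - w) (by rw [Matrix.mulVec_sub, hvw, sub_self])
    exact sub_eq_zero.mp h
  have hGiG : G⁻¹ * G = 1 := Matrix.nonsing_inv_mul G (Matrix.isUnit_iff_isUnit_det G |>.mp hG)
  have hGGi : G * G⁻¹ = 1 := Matrix.mul_nonsing_inv G (Matrix.isUnit_iff_isUnit_det G |>.mp hG)
  -- pseudoinverse
  set P : Matrix (Fin n) (Fin m) ℝ := G⁻¹ * Sᵀ with hPdef
  have hPS : P * S = 1 := by rw [hPdef, Matrix.mul_assoc, ← hGdef, hGiG]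
  have hSP : S * P = B := by rw [hPdef, hB, ← Matrix.mul_assoc]
  have hBS : B * S = S := by
    rw [hB, Matrix.mul_assoc (S * G⁻¹), ← hGdef, Matrix.mul_assoc, hGiG, Matrix.mul_one]
  have hPB : P * B = P := by rw [← hSP, ← Matrix.mul_assoc, hPS, Matrix.one_mul]
  have hBB : B * B = B := by
    rw [← hSP, Matrix.mul_assoc, ← Matrix.mul_assoc P, hPS, Matrix.one_mul]
  have hStB : Sᵀ * B = Sᵀ := by
    rw [hB, ← Matrix.mul_assoc, ← Matrix.mul_assoc, ← hGdef, hGGi, Matrix.one_mul]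
  have hB1B : B * (1 - B) = 0 := by rw [Matrix.mul_sub, Matrix.mul_one, hBB, sub_self]
  -- W * P = P * (B * R * B)
  have hWP : W * P = P * (B * R * B) := by
    rw [hW]
    calc P * R * S * P = P * R * (S * P) := by rw [Matrix.mul_assoc]
      _ = P * (R * B) := by rw [hSP, Matrix.mul_assoc]
      _ = (P * B) * (R * B) := by rw [hPB]
      _ = P * (B * R * B) := by simp only [Matrix.mul_assoc]
  rw [← Matrix.exists_mulVec_eq_zero_iff, ← Matrix.exists_mulVec_eq_zero_iff]
  constructor
  · rintro ⟨z, hz0, hzW⟩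
    refine ⟨S *ᵥ z, fun h => hz0 (hSker z h), ?_⟩
    have h2 : (1 - B) * S = 0 := by rw [Matrix.sub_mul, Matrix.one_mul, hBS, sub_self]
    have h3 : (1 - B) * R * (1 - B) * S = 0 := by
      rw [Matrix.mul_assoc ((1 - B) * R), h2, Matrix.mul_zero]
    have h1 : B * R * B * S = S * W := by
      rw [Matrix.mul_assoc, hBS, hW, ← hSP]
      simp [Matrix.mul_assoc]
    rw [hΩS, Matrix.sub_mulVec, Matrix.mulVec_mulVec, Matrix.mulVec_mulVec, h1, h3,
      Matrix.zero_mulVec, sub_zero, ← Matrix.mulVec_mulVec, hzW, Matrix.mulVec_zero]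
  · rintro ⟨x, hx0, hxΩ⟩
    have hB1 : ((B * R * B) *ᵥ x) - ((1 - B) * R * (1 - B)) *ᵥ x = 0 := by
      rw [← Matrix.sub_mulVec, ← hΩS, hxΩ]
    have hBΩ1 : B *ᵥ ((B * R * B) *ᵥ x) = (B * R * B) *ᵥ x := by
      rw [Matrix.mulVec_mulVec, ← Matrix.mul_assoc, ← Matrix.mul_assoc, hBB]
    have hBΩ2 : B *ᵥ (((1 - B) * R * (1 - B)) *ᵥ x) = 0 := by
      rw [Matrix.mulVec_mulVec, ← Matrix.mul_assoc, ← Matrix.mul_assoc, hB1B,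
        Matrix.zero_mul, Matrix.zero_mul, Matrix.zero_mulVec]
    have hpart1 : (B * R * B) *ᵥ x = 0 := by
      have h := congrArg (fun y => B *ᵥ y) hB1
      simpa [Matrix.mulVec_sub, hBΩ1, hBΩ2] using h
    have hpart2 : ((1 - B) * R * (1 - B)) *ᵥ x = 0 := by
      have h := sub_eq_zero.mp hB1
      rw [← h, hpart1]
    by_cases hBx : B *ᵥ x = 0
    · -- x in kernel of B
      have h1Bx : (1 - B) *ᵥ x = x := by
        rw [Matrix.sub_mulVec, Matrix.one_mulVec, hBx, sub_zero]
      have hRx : (1 - B) *ᵥ (R *ᵥ x) = 0 := by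
        have h := hpart2
        rwa [← Matrix.mulVec_mulVec, ← Matrix.mulVec_mulVec, h1Bx] at h
      have hBRx : B *ᵥ (R *ᵥ x) = R *ᵥ x := by
        rw [Matrix.sub_mulVec, Matrix.one_mulVec, sub_eq_zero] at hRx
        exact hRx.symm
      have hRx0 : R *ᵥ x ≠ 0 := by
        intro h
        apply hx0
        have h' : (R * R) *ᵥ x = 0 := by rw [← Matrix.mulVec_mulVec, h, Matrix.mulVec_zero]
        rwa [hR2, Matrix.one_mulVec] at h'
      have hPx0 : P *ᵥ x = 0 := by
        have hStx : Sᵀ *ᵥ x = 0 := by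
          have h' : (Sᵀ * B) *ᵥ x = 0 := by
            rw [← Matrix.mulVec_mulVec, hBx, Matrix.mulVec_zero]
          rwa [hStB] at h'
        rw [hPdef, ← Matrix.mulVec_mulVec, hStx, Matrix.mulVec_zero]
      have hSz : S *ᵥ (P *ᵥ (R *ᵥ x)) = R *ᵥ x := by
        rw [Matrix.mulVec_mulVec, hSP, hBRx]
      refine ⟨P *ᵥ (R *ᵥ x), ?_, ?_⟩
      · intro h
        apply hRx0
        rw [← hSz, h, Matrix.mulVec_zero]
      · have key : W *ᵥ (P *ᵥ (R *ᵥ x)) = (P * R) *ᵥ (S *ᵥ (P *ᵥ (R *ᵥ x))) := by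
          simp only [hW, ← hPdef, Matrix.mulVec_mulVec, Matrix.mul_assoc]
        rw [key, hSz, Matrix.mulVec_mulVec, Matrix.mul_assoc, hR2, Matrix.mul_one, hPx0]
    · -- B *ᵥ x ≠ 0
      refine ⟨P *ᵥ x, ?_, ?_⟩
      · intro h
        apply hBx
        rw [← hSP, ← Matrix.mulVec_mulVec, h, Matrix.mulVec_zero]
      · rw [Matrix.mulVec_mulVec, hWP, ← Matrix.mulVec_mulVec, hpart1, Matrix.mulVec_zero]
end

section
/- Let B be a real orthogonal projection, B^⊥ = I − B, R real symmetric with R² = I, and Ω_S = BRB − B^⊥RB^⊥. Suppose Ω_S v = w v for v ≠ 0 with w ∈ {−1, 1}. Then: (i) if Bv ≠ 0 then Ω_S(Bv) = w(Bv) and R(Bv) = w(Bv); (ii) if B^⊥v ≠ 0 then Ω_S(B^⊥v) = w(B^⊥v) and R(B^⊥v) = −w(B^⊥v). -/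
open Matrix

private lemma helper1 {n : ℕ} (B : Matrix (Fin n) (Fin n) ℝ) (hBs : Bᵀ = B)
    (u r : Fin n → ℝ) (w : ℝ) (hw2 : w * w = 1)
    (hrr : r ⬝ᵥ r = u ⬝ᵥ u) (hBr : B.mulVec r = w • u) (hBu : B.mulVec u = u) :
    r = w • u := by
  have hur : u ⬝ᵥ r = w * (u ⬝ᵥ u) := by
    calc u ⬝ᵥ r = B.mulVec u ⬝ᵥ r := by rw [hBu]
    _ = u ⬝ᵥ B.mulVec r := by
        rw [Matrix.dotProduct_mulVec, ← Matrix.mulVec_transpose, hBs]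
    _ = u ⬝ᵥ (w • u) := by rw [hBr]
    _ = w * (u ⬝ᵥ u) := by rw [dotProduct_smul]; rfl
  have hs : (r - w • u) ⬝ᵥ (r - w • u) = 0 := by
    have hc : r ⬝ᵥ u = u ⬝ᵥ r := dotProduct_comm r u
    simp only [dotProduct_sub, sub_dotProduct, dotProduct_smul,
      smul_dotProduct, smul_eq_mul]
    linear_combination hrr - 2*w*hur - w*hc - (u ⬝ᵥ u) * hw2
  exact sub_eq_zero.mp (dotProduct_self_eq_zero.mp hs)

private lemma mainlem {n : ℕ} (B R ΩS : Matrix (Fin n) (Fin n) ℝ)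
    (hBs : Bᵀ = B) (hB2 : B * B = B) (hRs : Rᵀ = R) (hR2 : R * R = 1)
    (hΩS : ΩS = B * R * B - (1 - B) * R * (1 - B))
    (w : ℝ) (hw2 : w * w = 1) (v : Fin n → ℝ)
    (heig : ΩS.mulVec v = w • v) :
    ΩS.mulVec (B.mulVec v) = w • B.mulVec v ∧
    R.mulVec (B.mulVec v) = w • B.mulVec v := by
  set u := B.mulVec v with hu
  have hBu : B.mulVec u = u := by rw [hu, Matrix.mulVec_mulVec, hB2]
  have hB0 : B * (1 - B) = 0 := by rw [mul_sub, mul_one, hB2, sub_self]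
  have hBΩ : B * ΩS = B * R * B := by
    calc B * ΩS = B * (B * R * B) - B * ((1 - B) * R * (1 - B)) := by
          rw [hΩS, mul_sub]
    _ = B * R * B := by
          simp only [← mul_assoc]
          rw [hB2, hB0, zero_mul, zero_mul, sub_zero]
  have hBRu : B.mulVec (R.mulVec u) = w • u := by
    have h1 : (B * ΩS).mulVec v = w • u := by
      rw [← Matrix.mulVec_mulVec, heig, Matrix.mulVec_smul]
    rw [hBΩ] at h1
    rw [← Matrix.mulVec_mulVec, ← Matrix.mulVec_mulVec] at h1
    exact h1
  have hrr : (R.mulVec u) ⬝ᵥ (R.mulVec u) = u ⬝ᵥ u := by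
    rw [Matrix.dotProduct_mulVec, ← Matrix.mulVec_transpose, hRs,
      Matrix.mulVec_mulVec, hR2, Matrix.one_mulVec]
  have hR : R.mulVec u = w • u := helper1 B hBs u (R.mulVec u) w hw2 hrr hBRu hBu
  refine ⟨?_, hR⟩
  have hpu : (1 - B).mulVec u = 0 := by
    rw [Matrix.sub_mulVec, Matrix.one_mulVec, hBu, sub_self]
  rw [hΩS, Matrix.sub_mulVec, ← Matrix.mulVec_mulVec, ← Matrix.mulVec_mulVec,
    ← Matrix.mulVec_mulVec, ← Matrix.mulVec_mulVec, hBu, hR, hpu,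
    Matrix.mulVec_zero, Matrix.mulVec_zero, sub_zero, Matrix.mulVec_smul, hBu]

/-- If Ω_S v = w v with w ∈ {−1,1} and v ≠ 0, then Bv (if nonzero) is an eigenvector of Ω_S
and of R with eigenvalue w, and B^⊥v (if nonzero) is an eigenvector of Ω_S with eigenvalue w
and of R with eigenvalue −w. -/
theorem stmt11 {n : ℕ} (B R : Matrix (Fin n) (Fin n) ℝ)
    (hBs : Bᵀ = B) (hB2 : B * B = B) (hRs : Rᵀ = R) (hR2 : R * R = 1)
    (ΩS : Matrix (Fin n) (Fin n) ℝ)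
    (hΩS : ΩS = B * R * B - (1 - B) * R * (1 - B))
    (w : ℝ) (hw : w = 1 ∨ w = -1) (v : Fin n → ℝ) (hv : v ≠ 0)
    (heig : ΩS.mulVec v = w • v) :
    (B.mulVec v ≠ 0 →
      ΩS.mulVec (B.mulVec v) = w • B.mulVec v ∧
      R.mulVec (B.mulVec v) = w • B.mulVec v) ∧
    ((1 - B).mulVec v ≠ 0 →
      ΩS.mulVec ((1 - B).mulVec v) = w • (1 - B).mulVec v ∧
      R.mulVec ((1 - B).mulVec v) = (-w) • (1 - B).mulVec v) := by
  have hw2 : w * w = 1 := by rcases hw with h | h <;> rw [h] <;> norm_num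
  constructor
  · intro _
    exact mainlem B R ΩS hBs hB2 hRs hR2 hΩS w hw2 v heig
  · intro _
    have hB's : (1 - B)ᵀ = 1 - B := by rw [Matrix.transpose_sub, Matrix.transpose_one, hBs]
    have hB'2 : (1 - B) * (1 - B) = 1 - B := by
      rw [sub_mul, one_mul, mul_sub, mul_one, hB2, sub_self, sub_zero]
    have hΩ' : -ΩS = (1 - B) * R * (1 - B) - (1 - (1 - B)) * R * (1 - (1 - B)) := by
      rw [sub_sub_cancel, hΩS, neg_sub]
    have heig' : (-ΩS).mulVec v = (-w) • v := by
      rw [Matrix.neg_mulVec, heig, neg_smul]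
    have hw2' : (-w) * (-w) = 1 := by rw [neg_mul_neg]; exact hw2
    obtain ⟨h1, h2⟩ := mainlem (1 - B) R (-ΩS) hB's hB'2 hRs hR2 hΩ' (-w) hw2' v heig'
    refine ⟨?_, h2⟩
    rw [Matrix.neg_mulVec, neg_smul] at h1
    exact neg_injective h1
end

section
/- Define τ_A(δ) = γ⋆ − 1 with γ⋆ = 4/(3 − √((2−ρ⋆)/(2+ρ⋆))) and ρ⋆ = 2√(1 − (1−δ)²) for δ ∈ (0, 1). Then as δ → 0⁺, 1 − τ_A(δ) = √(2δ) − 2δ + O(δ^{3/2}); consequently (1 − τ_A(δ))² = 2δ(1 − 2√(2δ) + O(δ)). -/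
open Asymptotics Filter

/-- Optimal ADMM rate as a function of the spectral gap δ = 1 − ω⋆. -/
noncomputable def tauA (δ : ℝ) : ℝ :=
  4 / (3 - Real.sqrt ((2 - 2 * Real.sqrt (1 - (1 - δ)^2)) /
        (2 + 2 * Real.sqrt (1 - (1 - δ)^2)))) - 1

set_option maxHeartbeats 1000000 in
lemma key_s18 (t r s u : ℝ) (ht0 : 0 < t) (ht : t ≤ 1/10)
    (hr0 : 0 ≤ r) (hr : r ≤ 3/20) (hr2 : r^2 = 2*t^2 - t^4)
    (hsU : s ≤ 1 - r + r^2/2) (hsL : 1 - r + r^2/2 - r^3 ≤ s)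
    (hu0 : 0 ≤ u) (hu2 : u^2 = 2*t^2) :
    |2*r - (u - 2*t^2) * (1 + 2*r + s*(1+r))| ≤ 100 * t^3 := by
  have hru : r ≤ u := by nlinarith
  have hut : t ≤ u := by nlinarith
  have hut2 : u ≤ 3*t/2 := by nlinarith
  have hd2 : u - r ≤ t^3 := by nlinarith [mul_pos ht0 (mul_pos ht0 ht0)]
  have hrt : r ≤ 3*t/2 := le_trans hru hut2
  have h2t : 2*t^2 ≤ u := by nlinarith
  obtain ⟨d, hdd⟩ : ∃ d : ℝ, d = u - r := ⟨_, rfl⟩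
  obtain ⟨e, hee⟩ : ∃ e : ℝ, e = s - (1 - r + r^2/2) := ⟨_, rfl⟩
  have hd1 : 0 ≤ d := by rw [hdd]; linarith
  have hd2' : d ≤ t^3 := by rw [hdd]; linarith
  have he2 : e ≤ 0 := by rw [hee]; linarith
  have he1 : -r^3 ≤ e := by rw [hee]; linarith
  have hidem : 2*r - (u - 2*t^2) * (1 + 2*r + s*(1+r)) =
      2*t^4 + r^3/2 - 2*d - 2*r*d + r^2*d/2 + 4*r*t^2 - t^2*r^2
        - (u - 2*t^2)*(r^3/2 + e*(1+r)) := by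
    subst hdd; subst hee
    linear_combination (-2 : ℝ) * hr2
  rw [hidem]
  have ht3 : (0:ℝ) ≤ t^3 := by positivity
  have h_r3 : r^3 ≤ 4*t^3 := by nlinarith [pow_le_pow_left₀ hr0 hrt 3]
  have h_rd : r*d ≤ (3/20)*t^3 := mul_le_mul hr hd2' hd1 (by norm_num)
  have h_rd0 : 0 ≤ r*d := mul_nonneg hr0 hd1
  have h_r2d : r^2*d ≤ t^3 := by
    calc r^2*d ≤ 1*d := mul_le_mul_of_nonneg_right (by nlinarith) hd1
    _ = d := one_mul d
    _ ≤ t^3 := hd2'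
  have h_r2d0 : 0 ≤ r^2*d := mul_nonneg (sq_nonneg r) hd1
  have h_rt2 : r*t^2 ≤ (3/2)*t^3 := by
    calc r*t^2 ≤ (3*t/2)*t^2 := mul_le_mul_of_nonneg_right hrt (sq_nonneg t)
    _ = (3/2)*t^3 := by ring
  have h_rt20 : 0 ≤ r*t^2 := mul_nonneg hr0 (sq_nonneg t)
  have h_t4 : t^4 ≤ t^3/10 := by
    calc t^4 = t^3*t := by ring
    _ ≤ t^3*(1/10) := mul_le_mul_of_nonneg_left ht ht3
    _ = t^3/10 := by ring
  have h_t40 : (0:ℝ) ≤ t^4 := by positivity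
  have h_t2r2 : t^2*r^2 ≤ 2*t^4 := by nlinarith [pow_nonneg ht0.le 6]
  have h_t2r20 : 0 ≤ t^2*r^2 := by positivity
  have hX1 : 0 ≤ u - 2*t^2 := by linarith
  have hX2 : u - 2*t^2 ≤ 3/20 := by nlinarith
  have hr30 : (0:ℝ) ≤ r^3 := by positivity
  have hY1 : r^3/2 + e*(1+r) ≤ 2*r^3 := by nlinarith
  have hY2 : -(2*r^3) ≤ r^3/2 + e*(1+r) := by nlinarith
  have hXY1 : (u - 2*t^2)*(r^3/2 + e*(1+r)) ≤ (3/20)*(8*t^3) := by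
    nlinarith [mul_nonneg hX1 (by linarith : (0:ℝ) ≤ 2*r^3 - (r^3/2 + e*(1+r)))]
  have hXY2 : -((3/20)*(8*t^3)) ≤ (u - 2*t^2)*(r^3/2 + e*(1+r)) := by
    nlinarith [mul_nonneg hX1 (by linarith : (0:ℝ) ≤ (r^3/2 + e*(1+r)) + 2*r^3)]
  rw [abs_le]
  constructor <;> [linarith; linarith]


lemma s_upper (r s : ℝ) (hr0 : 0 ≤ r) (hr : r ≤ 3/20) (hs0 : 0 ≤ s)
    (hs2 : s^2 * (1 + r) = 1 - r) : s ≤ 1 - r + r^2/2 := by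
  nlinarith [sq_nonneg (s - (1 - r + r^2/2)), sq_nonneg (s + (1 - r + r^2/2)), sq_nonneg r, pow_nonneg hr0 3]

lemma s_lower (r s : ℝ) (hr0 : 0 ≤ r) (hr : r ≤ 3/20) (hs0 : 0 ≤ s)
    (hs2 : s^2 * (1 + r) = 1 - r) : 1 - r + r^2/2 - r^3 ≤ s := by
  nlinarith [sq_nonneg (s - (1 - r + r^2/2 - r^3)), sq_nonneg (s + (1 - r + r^2/2 - r^3)), pow_nonneg hr0 3, pow_nonneg hr0 4, pow_nonneg hr0 5, pow_nonneg hr0 6]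

lemma core (δ : ℝ) (hδ0 : 0 < δ) (hδ1 : δ ≤ 1/100) :
    |(1 - tauA δ) - (Real.sqrt (2*δ) - 2*δ)| ≤ 100 * δ ^ ((3:ℝ)/2) := by
  have ht0 : 0 < Real.sqrt δ := Real.sqrt_pos.2 hδ0
  set t := Real.sqrt δ with htdef
  have ht2 : t^2 = δ := Real.sq_sqrt hδ0.le
  have ht : t ≤ 1/10 := by nlinarith
  set r := Real.sqrt (1 - (1 - δ)^2) with hrdef
  have hr0 : 0 ≤ r := Real.sqrt_nonneg _
  have hr2 : r^2 = 2*t^2 - t^4 := by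
    rw [hrdef, Real.sq_sqrt (by nlinarith)]; nlinarith [ht2]
  have hr : r ≤ 3/20 := by nlinarith
  set u := Real.sqrt (2*δ) with hudef
  have hu0 : 0 ≤ u := Real.sqrt_nonneg _
  have hu2 : u^2 = 2*t^2 := by rw [hudef, Real.sq_sqrt (by linarith)]; nlinarith
  set s := Real.sqrt ((2 - 2*r)/(2 + 2*r)) with hsdef
  have hs0 : 0 ≤ s := Real.sqrt_nonneg _
  have hden : (0:ℝ) < 2 + 2*r := by linarith
  have hs2 : s^2 = (2 - 2*r)/(2 + 2*r) :=
    Real.sq_sqrt (div_nonneg (by linarith) hden.le)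
  have hs2' : s^2 * (1 + r) = 1 - r := by
    have := hs2
    field_simp at this
    linarith
  have hsU : s ≤ 1 - r + r^2/2 := s_upper r s hr0 hr hs0 hs2'
  have hsL : 1 - r + r^2/2 - r^3 ≤ s := s_lower r s hr0 hr hs0 hs2'
  have hs1 : s ≤ 1 := by nlinarith
  have hD : (1:ℝ) ≤ 1 + 2*r + s*(1+r) := by nlinarith
  have hD0 : (0:ℝ) < 1 + 2*r + s*(1+r) := by linarith
  have hτ : 1 - tauA δ = 2*r / (1 + 2*r + s*(1+r)) := by
    have h3s : 3 - s ≠ 0 := by intro h; nlinarith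
    rw [tauA]
    rw [← hrdef, ← hsdef]
    have hstep : 1 - (4/(3-s) - 1) = (2 - 2*s)/(3-s) := by
      field_simp; ring
    rw [hstep, div_eq_div_iff h3s hD0.ne']
    linear_combination (-2:ℝ) * hs2'
  have hnum := key_s18 t r s u ht0 ht hr0 hr hr2 hsU hsL hu0 hu2
  have hpow : δ ^ ((3:ℝ)/2) = t^3 := by
    rw [htdef, Real.sqrt_eq_rpow, ← Real.rpow_natCast (δ ^ ((1:ℝ)/2)) 3,
      ← Real.rpow_mul hδ0.le]
    norm_num
  have heq : (1 - tauA δ) - (Real.sqrt (2*δ) - 2*δ)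
      = (2*r - (u - 2*t^2) * (1 + 2*r + s*(1+r))) / (1 + 2*r + s*(1+r)) := by
    rw [hτ, ← hudef, ← ht2]
    field_simp
  rw [heq, hpow, abs_div, abs_of_pos hD0]
  calc |2*r - (u - 2*t^2) * (1 + 2*r + s*(1+r))| / (1 + 2*r + s*(1+r))
      ≤ |2*r - (u - 2*t^2) * (1 + 2*r + s*(1+r))| / 1 := by
        apply div_le_div_of_nonneg_left (abs_nonneg _) one_pos hD
    _ ≤ 100 * t^3 := by rw [div_one]; exact hnum

set_option maxHeartbeats 1000000 in
lemma core2 (δ : ℝ) (hδ0 : 0 < δ) (hδ1 : δ ≤ 1/100) :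
    |(1 - tauA δ)^2 - 2*δ*(1 - 2*Real.sqrt (2*δ))| ≤ 1000 * δ^2 := by
  have hcore := core δ hδ0 hδ1
  have hw0 : 0 < Real.sqrt δ := Real.sqrt_pos.2 hδ0
  set w := Real.sqrt δ with hwdef
  have hw2 : w^2 = δ := Real.sq_sqrt hδ0.le
  have hw : w ≤ 1/10 := by nlinarith
  set u := Real.sqrt (2*δ) with hudef
  have hu0 : 0 ≤ u := Real.sqrt_nonneg _
  have hu2 : u^2 = 2*δ := Real.sq_sqrt (by linarith)
  have hu15 : u ≤ (3/2)*w := by nlinarith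
  have hpow : δ ^ ((3:ℝ)/2) = w^3 := by
    rw [hwdef, Real.sqrt_eq_rpow, ← Real.rpow_natCast (δ ^ ((1:ℝ)/2)) 3,
      ← Real.rpow_mul hδ0.le]
    norm_num
  rw [hpow] at hcore
  set a := u - 2*δ with hadef
  set e := (1 - tauA δ) - a with hedef
  have ha0 : 0 ≤ a := by rw [hadef]; nlinarith
  have ha15 : a ≤ (3/2)*w := by rw [hadef]; nlinarith
  have heU : e ≤ 100*w^3 := (abs_le.1 hcore).2
  have heL : -(100*w^3) ≤ e := (abs_le.1 hcore).1
  have hid : (1 - tauA δ)^2 - 2*δ*(1 - 2*u) = 4*δ^2 + 2*a*e + e^2 := by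
    have h1 : 1 - tauA δ = a + e := by rw [hedef]; ring
    rw [h1, hadef]
    linear_combination hu2
  rw [hid]
  have hw30 : (0:ℝ) ≤ w^3 := by positivity
  have h1 : a*e ≤ a*(100*w^3) := mul_le_mul_of_nonneg_left heU ha0
  have h1' : a*(-e) ≤ a*(100*w^3) := mul_le_mul_of_nonneg_left (by linarith) ha0
  have h2 : a*(100*w^3) ≤ ((3/2)*w)*(100*w^3) := mul_le_mul_of_nonneg_right ha15 (by positivity)
  have h3 : ((3/2)*w)*(100*w^3) = 150*w^4 := by ring
  have hprod : 0 ≤ (100*w^3 - e)*(100*w^3 + e) := mul_nonneg (by linarith) (by linarith)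
  have he2' : e^2 ≤ 10000*w^6 := by nlinarith [hprod]
  have hw6 : w^6 ≤ w^4*(1/100) := by nlinarith [pow_nonneg hw0.le 4]
  have hδw : δ^2 = w^4 := by nlinarith
  rw [abs_le]
  constructor <;> nlinarith [sq_nonneg e, pow_nonneg hw0.le 4]


/-- Asymptotics as δ → 0⁺: 1 − τ_A(δ) = √(2δ) − 2δ + O(δ^{3/2}) and consequently
(1 − τ_A(δ))² = 2δ(1 − 2√(2δ) + O(δ)). -/
theorem stmt18 :
    (fun δ : ℝ => (1 - tauA δ) - (Real.sqrt (2 * δ) - 2 * δ))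
      =O[nhdsWithin 0 (Set.Ioi 0)] (fun δ : ℝ => δ ^ (3/2 : ℝ)) ∧
    (fun δ : ℝ => (1 - tauA δ)^2 - 2 * δ * (1 - 2 * Real.sqrt (2 * δ)))
      =O[nhdsWithin 0 (Set.Ioi 0)] (fun δ : ℝ => δ ^ 2) := by
  have hmem : ∀ᶠ δ in nhdsWithin (0:ℝ) (Set.Ioi 0), δ ∈ Set.Ioc (0:ℝ) (1/100) :=
    Ioc_mem_nhdsGT_of_mem (by norm_num)
  constructor
  · rw [Asymptotics.isBigO_iff]
    refine ⟨100, ?_⟩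
    filter_upwards [hmem] with δ hδ
    rw [Real.norm_eq_abs, Real.norm_eq_abs,
      abs_of_nonneg (Real.rpow_nonneg hδ.1.le _)]
    exact core δ hδ.1 hδ.2
  · rw [Asymptotics.isBigO_iff]
    refine ⟨1000, ?_⟩
    filter_upwards [hmem] with δ hδ
    rw [Real.norm_eq_abs, Real.norm_eq_abs, abs_of_nonneg (sq_nonneg δ)]
    exact core2 δ hδ.1 hδ.2
end
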